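/- Let U ∈ Z^d with M ≤ |U|_∞, set η := U/|U| (an ℓ2-unit vector) and m := ⌊|U|⌋. Then for all large m there exists a constant C9 > 0 (depending only on ν, d, α, δ and κ) such that E[T(0,U)] ≤ E[T_σ(D_m(0), D_m(mη))] + C̃3·m·exp(−C̃4·m^δ) + C9·m^{dδ}, where C̃3, C̃4 are the constants for which |E[T(D_m(0),D_m(mη))] − E[T_σ(D_m(0),D_m(mη))]| ≤ C̃3·m·exp(−C̃4·m^δ). -/

import Mathlib

open MeasureTheory ProbabilityTheory Filter Real Set

namespace FPP

/-- Vertices of the `d`-dimensional cubic lattice. -/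
abbrev V (d : ℕ) := Fin d → ℤ

/-- A configuration of edge weights (indexed by unordered pairs of vertices). -/
abbrev Cfg (d : ℕ) := Sym2 (V d) → ℝ

/-- Nearest-neighbour adjacency on `ℤ^d`. -/
def adj {d : ℕ} (x y : V d) : Prop := ∑ i, |x i - y i| = 1

/-- `*`-adjacency: distinct points at `ℓ∞`-distance one. -/
def adjStar {d : ℕ} (x y : V d) : Prop := x ≠ y ∧ ∀ i, |x i - y i| ≤ 1

/-- `e` is an edge of the lattice `ℤ^d`. -/
def IsEdge {d : ℕ} (e : Sym2 (V d)) : Prop := ∃ x y, adj x y ∧ e = s(x, y)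

/-- The passage time of a path (a list of vertices). -/
def pathCost {d : ℕ} (w : Cfg d) : List (V d) → ℝ
  | [] => 0
  | [_] => 0
  | x :: y :: rest => w s(x, y) + pathCost w (y :: rest)

/-- `γ` starts in `A` and ends in `B`. -/
def connects {d : ℕ} (γ : List (V d)) (A B : Set (V d)) : Prop :=
  (∃ a ∈ A, γ.head? = some a) ∧ (∃ b ∈ B, γ.getLast? = some b)

/-- First passage time between two sets of vertices. -/
noncomputable def fpt {d : ℕ} (w : Cfg d) (A B : Set (V d)) : ℝ :=
  sInf {t | ∃ γ : List (V d), γ.Chain' adj ∧ connects γ A B ∧ pathCost w γ = t}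

/-- Point-to-point first passage time. -/
noncomputable def pt {d : ℕ} (w : Cfg d) (x y : V d) : ℝ := fpt w {x} {y}

/-- A lattice point `[x]` within `ℓ∞`-distance `1/2` of `x ∈ ℝ^d`. -/
noncomputable def rd {d : ℕ} (x : Fin d → ℝ) : V d := fun i => round (x i)

/-- `a_{0,n}(ξ) = T(0, nξ)`. -/
noncomputable def aT {d : ℕ} (w : Cfg d) (n : ℕ) (ξ : Fin d → ℝ) : ℝ :=
  pt w 0 (rd ((n : ℝ) • ξ))

/-- `ξ` is an `ℓ2`-unit vector. -/
def unitVec {d : ℕ} (ξ : Fin d → ℝ) : Prop := ∑ i, ξ i ^ 2 = 1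

/-- The open cluster of `x` in a bond configuration `η`. -/
def openCluster {d : ℕ} (η : Sym2 (V d) → Bool) (x : V d) : Set (V d) :=
  {y | ∃ γ : List (V d), γ.Chain' (fun a b => adj a b ∧ η s(a, b) = true) ∧
        γ.head? = some x ∧ γ.getLast? = some y}

/-- `Q` is an i.i.d. Bernoulli(`p`) bond percolation measure on `ℤ^d`. -/
def BernoulliIID (d : ℕ) (Q : Measure (Sym2 (V d) → Bool)) (p : ℝ) : Prop :=
  IsProbabilityMeasure Q ∧
  (∀ e : Sym2 (V d), IsEdge e → (Q {η | η e = true}).toReal = p) ∧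
  iIndepFun (fun (e : {e : Sym2 (V d) // IsEdge e}) η => η e.1) Q

/-- The critical probability of i.i.d. bond percolation on `ℤ^d`. -/
noncomputable def pc (d : ℕ) : ℝ :=
  sSup {p : ℝ | p ∈ Icc (0 : ℝ) 1 ∧
    ∀ Q : Measure (Sym2 (V d) → Bool), BernoulliIID d Q p →
      Q {η | (openCluster η 0).Infinite} = 0}

/-- `P` makes the edge weights i.i.d. with common law `ν`. -/
def IID (d : ℕ) (P : Measure (Cfg d)) (ν : Measure ℝ) : Prop :=
  IsProbabilityMeasure P ∧
  (∀ e : Sym2 (V d), IsEdge e → P.map (fun w => w e) = ν) ∧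
  iIndepFun (fun (e : {e : Sym2 (V d) // IsEdge e}) w => w e.1) P

/-- The site `x` is unhealthy: some adjacent edge has weight `> κ⁻¹`. -/
def unhealthy {d : ℕ} (κ : ℝ) (w : Cfg d) (x : V d) : Prop :=
  ∃ y, adj x y ∧ κ⁻¹ < w s(x, y)

/-- The bad nearest-neighbour cluster `C₋(x)`: sites joined to `x` by paths all of
whose edges are bad (weight `< κ`). -/
def badCluster {d : ℕ} (κ : ℝ) (w : Cfg d) (x : V d) : Set (V d) :=
  {y | ∃ γ : List (V d), γ.Chain' (fun a b => adj a b ∧ w s(a, b) < κ) ∧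
        γ.head? = some x ∧ γ.getLast? = some y}

/-- The unhealthy `*`-connected cluster `C₊(x)`. -/
def unhealthyCluster {d : ℕ} (κ : ℝ) (w : Cfg d) (x : V d) : Set (V d) :=
  {y | ∃ γ : List (V d), γ.Chain' adjStar ∧ (∀ v ∈ γ, unhealthy κ w v) ∧
        γ.head? = some x ∧ γ.getLast? = some y}

/-- `s` has fewer than `r` vertices. -/
def smallSet {d : ℕ} (s : Set (V d)) (r : ℝ) : Prop := s.Finite ∧ (s.ncard : ℝ) < r

open Classical in
/-- The truncated weights `σ` (with cutoff `κ` and cluster-size threshold `r`). -/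
noncomputable def tw {d : ℕ} (κ r : ℝ) (w : Cfg d) : Cfg d := fun e =>
  if (κ ≤ w e ∧ w e ≤ κ⁻¹)
      ∨ (w e < κ ∧ ∃ x ∈ e, smallSet (badCluster κ w x) r)
      ∨ (κ⁻¹ < w e ∧ ∃ x ∈ e, smallSet (unhealthyCluster κ w x) r)
    then w e else 1

/-- The box `D_n(c) = c + [-3^d κ⁻¹ n^δ, 3^d κ⁻¹ n^δ]^d` (as a set of lattice points). -/
def Dbox {d : ℕ} (κ δ : ℝ) (n : ℕ) (c : Fin d → ℝ) : Set (V d) :=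
  {v | ∀ i, |(v i : ℝ) - c i| ≤ 3 ^ d * κ⁻¹ * (n : ℝ) ^ δ}

/-- `|U|_∞ = M`. -/
def linfEqM {d : ℕ} (U : V d) (M : ℕ) : Prop :=
  (∀ i, |U i| ≤ (M : ℤ)) ∧ ∃ i, |U i| = (M : ℤ)

/-- Kesten's quantity `Λ(M, n)`. -/
noncomputable def Lam {d : ℕ} (P : Measure (Cfg d)) (ξ : Fin d → ℝ) (μ : ℝ) (M n : ℕ) : ℝ :=
  sInf {t | ∃ p : V d → ℕ, (Function.support p).Finite ∧
        (∀ U, p U ≠ 0 → linfEqM U M) ∧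
        (∀ i, |((∑ᶠ U, p U • U) i : ℝ) - (n : ℝ) * ξ i| ≤ (M : ℝ)) ∧
        t = ∑ᶠ U, (p U : ℝ) * ∫ w, pt w 0 U ∂P} - (n : ℝ) * μ

variable {d : ℕ}

lemma pathCost_nil (w : Cfg d) : pathCost w ([] : List (V d)) = 0 := rfl
lemma pathCost_single (w : Cfg d) (x : V d) : pathCost w ([x] : List (V d)) = 0 := rfl
lemma pathCost_cons (w : Cfg d) (x y : V d) (r : List (V d)) :
    pathCost w (x :: y :: r) = w s(x, y) + pathCost w (y :: r) := rfl

lemma pathCost_nonneg {w : Cfg d} (hw : ∀ e, IsEdge e → 0 ≤ w e) :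
    ∀ γ : List (V d), γ.Chain' adj → 0 ≤ pathCost w γ
  | [], _ => le_refl _
  | [_], _ => le_refl _
  | x :: y :: r, h => by
    obtain ⟨h1, h2⟩ := List.isChain_cons_cons.1 h
    have i1 := pathCost_nonneg hw (y :: r) h2
    have i2 := hw s(x, y) ⟨x, y, h1, rfl⟩
    rw [pathCost_cons]; linarith

def edgeList : List (V d) → List (Sym2 (V d))
  | [] => []
  | [_] => []
  | x :: y :: r => s(x, y) :: edgeList (y :: r)

lemma edgeList_cons (x y : V d) (r : List (V d)) :
    edgeList (x :: y :: r) = s(x, y) :: edgeList (y :: r) := rfl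

lemma pathCost_eq (w : Cfg d) : ∀ γ : List (V d), pathCost w γ = ((edgeList γ).map w).sum
  | [] => rfl
  | [_] => rfl
  | x :: y :: r => by
    rw [pathCost_cons, edgeList_cons, List.map_cons, List.sum_cons, pathCost_eq w (y :: r)]

lemma mem_of_mem_edgeList : ∀ γ : List (V d), ∀ e ∈ edgeList γ,
    ∃ u v, u ∈ γ ∧ v ∈ γ ∧ e = s(u, v)
  | [], e, he => by simp [edgeList] at he
  | [_], e, he => by simp [edgeList] at he
  | x :: y :: r, e, he => by
    rw [edgeList_cons, List.mem_cons] at he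
    rcases he with rfl | he
    · exact ⟨x, y, by simp, by simp, rfl⟩
    · obtain ⟨u, v, hu, hv, rfl⟩ := mem_of_mem_edgeList (y :: r) e he
      exact ⟨u, v, List.mem_cons_of_mem _ hu, List.mem_cons_of_mem _ hv, rfl⟩

lemma edgeList_nodup : ∀ γ : List (V d), γ.Nodup → (edgeList γ).Nodup
  | [], _ => List.nodup_nil
  | [_], _ => List.nodup_nil
  | x :: y :: r, h => by
    obtain ⟨hx, h2⟩ := List.nodup_cons.1 h
    rw [edgeList_cons, List.nodup_cons]
    refine ⟨?_, edgeList_nodup (y :: r) h2⟩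
    intro hmem
    obtain ⟨u, v, hu, hv, heq⟩ := mem_of_mem_edgeList (y :: r) _ hmem
    have hx' : x ∈ s(u, v) := heq ▸ Sym2.mem_mk_left x y
    rcases Sym2.mem_iff.1 hx' with rfl | rfl
    · exact hx hu
    · exact hx hv

lemma edgeList_spec (Q : V d → Prop) : ∀ γ : List (V d), γ.Chain' adj → (∀ v ∈ γ, Q v) →
    ∀ e ∈ edgeList γ, ∃ u v, adj u v ∧ Q u ∧ Q v ∧ e = s(u, v)
  | [], _, _, e, he => by simp [edgeList] at he
  | [_], _, _, e, he => by simp [edgeList] at he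
  | x :: y :: r, hc, hQ, e, he => by
    obtain ⟨h1, h2⟩ := List.isChain_cons_cons.1 hc
    rw [edgeList_cons, List.mem_cons] at he
    rcases he with rfl | he
    · exact ⟨x, y, h1, hQ x (by simp), hQ y (by simp), rfl⟩
    · exact edgeList_spec Q (y :: r) h2 (fun v hv => hQ v (List.mem_cons_of_mem _ hv)) e he

lemma pathCost_le_sum (w : Cfg d) (E' : Finset (Sym2 (V d))) (hw : ∀ e ∈ E', 0 ≤ w e)
    (γ : List (V d)) (hnd : γ.Nodup) (hmem : ∀ e ∈ edgeList γ, e ∈ E') :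
    pathCost w γ ≤ ∑ e ∈ E', w e := by
  classical
  rw [pathCost_eq, ← List.sum_toFinset w (edgeList_nodup γ hnd)]
  exact Finset.sum_le_sum_of_subset_of_nonneg
    (fun e he => hmem e (List.mem_toFinset.1 he)) (fun e he _ => hw e he)

lemma glue (w : Cfg d) : ∀ (γ1 : List (V d)) {γ2 : List (V d)} {x : V d},
    γ1.getLast? = some x → γ2.head? = some x → γ1.Chain' adj → γ2.Chain' adj →
    ∃ γ3 : List (V d), γ3.Chain' adj ∧ γ3.head? = γ1.head? ∧ γ3.getLast? = γ2.getLast? ∧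
      pathCost w γ3 = pathCost w γ1 + pathCost w γ2
  | [], γ2, x, h1, _, _, _ => by simp at h1
  | [a], γ2, x, h1, h2, _, c2 => by
    have ha : a = x := by simpa using h1
    subst ha
    exact ⟨γ2, c2, by rw [h2]; rfl, rfl, by rw [pathCost_single w a]; ring⟩
  | p :: q :: r, γ2, x, h1, h2, c1, c2 => by
    obtain ⟨hpq, c1'⟩ := List.isChain_cons_cons.1 c1
    have h1' : (q :: r).getLast? = some x := by rwa [List.getLast?_cons_cons] at h1
    obtain ⟨γ3, hc3, hh3, hl3, hcost3⟩ := glue w (q :: r) h1' h2 c1' c2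
    obtain ⟨t, rfl⟩ : ∃ t, γ3 = q :: t := by
      cases γ3 with
      | nil => simp at hh3
      | cons z t => exact ⟨t, by rw [show z = q from by simpa using hh3]⟩
    refine ⟨p :: q :: t, List.isChain_cons_cons.2 ⟨hpq, hc3⟩, rfl, ?_, ?_⟩
    · rw [List.getLast?_cons_cons]; exact hl3
    · rw [pathCost_cons, pathCost_cons, hcost3]; ring

lemma adj_update (v : V d) (i : Fin d) : adj v (Function.update v i (v i + 1)) := by
  unfold adj
  have h : ∀ j, |v j - Function.update v i (v i + 1) j| = if j = i then 1 else 0 := by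
    intro j
    by_cases hj : j = i
    · subst hj
      rw [Function.update_self, if_pos rfl, show v j - (v j + 1) = -1 by ring]
      norm_num
    · rw [Function.update_of_ne hj, if_neg hj, sub_self, abs_zero]
  rw [Finset.sum_congr rfl fun j _ => h j]
  simp

lemma adj_char {x y : V d} (h : adj x y) :
    ∃ i : Fin d, y = Function.update x i (x i + 1) ∨ x = Function.update y i (y i + 1) := by
  have hn : ∑ j, (x j - y j).natAbs = 1 := by
    have h2 : ((∑ j, (x j - y j).natAbs : ℕ) : ℤ) = 1 := by
      push_cast
      exact h
    exact_mod_cast h2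
  have hex : ∃ i, (x i - y i).natAbs ≠ 0 := by
    by_contra hc
    push_neg at hc
    rw [Finset.sum_eq_zero fun j _ => hc j] at hn
    omega
  obtain ⟨i₀, hi₀⟩ := hex
  have h1 : (x i₀ - y i₀).natAbs ≤ 1 :=
    hn ▸ Finset.single_le_sum (f := fun j => (x j - y j).natAbs) (fun j _ => Nat.zero_le _)
      (Finset.mem_univ i₀)
  have h2 : ∑ j ∈ Finset.univ.erase i₀, (x j - y j).natAbs = 0 := by
    have h3 : (x i₀ - y i₀).natAbs + ∑ j ∈ Finset.univ.erase i₀, (x j - y j).natAbs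
        = ∑ j, (x j - y j).natAbs :=
      Finset.add_sum_erase Finset.univ (fun j => (x j - y j).natAbs) (Finset.mem_univ i₀)
    omega
  have h4 : ∀ j, j ≠ i₀ → x j = y j := by
    intro j hj
    have := Finset.sum_eq_zero_iff.1 h2 j (Finset.mem_erase.2 ⟨hj, Finset.mem_univ j⟩)
    omega
  have h5 : y i₀ = x i₀ + 1 ∨ x i₀ = y i₀ + 1 := by omega
  rcases h5 with h5 | h5
  · refine ⟨i₀, Or.inl (funext fun j => ?_)⟩
    by_cases hj : j = i₀
    · subst hj; rw [Function.update_self]; omega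
    · rw [Function.update_of_ne hj]; exact (h4 j hj).symm
  · refine ⟨i₀, Or.inr (funext fun j => ?_)⟩
    by_cases hj : j = i₀
    · subst hj; rw [Function.update_self]; omega
    · rw [Function.update_of_ne hj]; exact h4 j hj

lemma exists_path (b : V d) : ∀ (n : ℕ) (a : V d), (∑ i, (a i - b i).natAbs) = n →
    ∃ γ : List (V d), γ.Chain' adj ∧ γ.head? = some a ∧ γ.getLast? = some b ∧ γ.Nodup ∧
      (∀ v ∈ γ, ∀ i, min (a i) (b i) ≤ v i ∧ v i ≤ max (a i) (b i)) ∧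
      (∀ v ∈ γ, (∑ i, (v i - b i).natAbs) ≤ n) := by
  intro n
  induction n with
  | zero =>
    intro a ha
    have hab : a = b := by
      funext i
      have h0 : (a i - b i).natAbs = 0 :=
        Finset.sum_eq_zero_iff.1 ha i (Finset.mem_univ i)
      omega
    subst hab
    refine ⟨[a], List.isChain_singleton a, rfl, rfl, List.nodup_singleton a, ?_, ?_⟩
    · intro v hv i
      have : v = a := by simpa using hv
      subst this
      omega
    · intro v hv
      have : v = a := by simpa using hv
      subst this
      exact le_of_eq ha
  | succ n ih =>
    intro a ha
    have hex : ∃ i, a i ≠ b i := by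
      by_contra hc
      push_neg at hc
      rw [Finset.sum_eq_zero fun j _ => by rw [hc j]; simp] at ha
      omega
    obtain ⟨i₀, hi₀⟩ := hex
    set t : ℤ := if a i₀ < b i₀ then a i₀ + 1 else a i₀ - 1 with ht
    set a' : V d := Function.update a i₀ t with ha'
    have ha'i : a' i₀ = t := Function.update_self _ _ _
    have ha'j : ∀ j, j ≠ i₀ → a' j = a j := fun j hj => Function.update_of_ne hj _ _
    have hkey : (t - b i₀).natAbs + 1 = (a i₀ - b i₀).natAbs ∧
        min (a i₀) (b i₀) ≤ t ∧ t ≤ max (a i₀) (b i₀) := by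
      rw [ht]; split_ifs <;> omega
    have hadj : adj a a' := by
      unfold adj
      have h : ∀ j, |a j - a' j| = if j = i₀ then |a i₀ - t| else 0 := by
        intro j
        by_cases hj : j = i₀
        · subst hj; rw [ha'i, if_pos rfl]
        · rw [ha'j j hj, if_neg hj, sub_self, abs_zero]
      rw [Finset.sum_congr rfl fun j _ => h j]
      have habs : |a i₀ - t| = 1 := by
        rw [ht]; split_ifs <;> simp [abs_sub_comm] <;> omega
      simp [habs]
    have hsum' : ∑ i, (a' i - b i).natAbs = n := by
      have hupd : (fun i => (a' i - b i).natAbs)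
          = Function.update (fun i => (a i - b i).natAbs) i₀ ((t - b i₀).natAbs) := by
        funext j
        by_cases hj : j = i₀
        · subst hj; rw [ha'i, Function.update_self]
        · rw [ha'j j hj, Function.update_of_ne hj]
      have h1 : ∑ i, (a' i - b i).natAbs
          = (t - b i₀).natAbs + ∑ i ∈ Finset.univ.erase i₀, (a i - b i).natAbs := by
        calc ∑ i, (a' i - b i).natAbs
            = ∑ i, Function.update (fun i => (a i - b i).natAbs) i₀ ((t - b i₀).natAbs) i :=
              Finset.sum_congr rfl fun j _ => congrFun hupd j
          _ = (t - b i₀).natAbs + ∑ i ∈ Finset.univ.erase i₀, (a i - b i).natAbs := by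
              rw [Finset.erase_eq]
              exact Finset.sum_update_of_mem (Finset.mem_univ i₀) _ _
      have h2 : (a i₀ - b i₀).natAbs + ∑ i ∈ Finset.univ.erase i₀, (a i - b i).natAbs
          = ∑ i, (a i - b i).natAbs :=
        Finset.add_sum_erase Finset.univ (fun i => (a i - b i).natAbs) (Finset.mem_univ i₀)
      omega
    obtain ⟨γ', hc', hh', hl', hnd', hbox', hdist'⟩ := ih a' hsum'
    refine ⟨a :: γ', ?_, rfl, ?_, ?_, ?_, ?_⟩
    · refine List.isChain_cons.2 ?_
      refine ⟨fun y hy => ?_, hc'⟩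
      rw [hh'] at hy
      have hya : a' = y := by simpa using hy
      rw [← hya]
      exact hadj
    · cases γ' with
      | nil => simp at hh'
      | cons z tl => rw [List.getLast?_cons_cons]; exact hl'
    · rw [List.nodup_cons]
      refine ⟨fun hmem => ?_, hnd'⟩
      have := hdist' a hmem
      omega
    · intro v hv i
      rcases List.mem_cons.1 hv with rfl | hv'
      · omega
      · have h1 := hbox' v hv' i
        by_cases hj : i = i₀
        · subst hj; rw [ha'i] at h1; omega
        · rw [ha'j i hj] at h1; omega
    · intro v hv
      rcases List.mem_cons.1 hv with rfl | hv'
      · exact le_of_eq ha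
      · exact le_trans (hdist' v hv') (Nat.le_succ n)

lemma measurable_pathCost : ∀ γ : List (V d), Measurable fun w : Cfg d => pathCost w γ
  | [] => measurable_const
  | [_] => measurable_const
  | x :: y :: r => by
    have h1 := measurable_pathCost (y :: r)
    have h2 : Measurable fun w : Cfg d => w s(x, y) := measurable_pi_apply _
    simp only [pathCost_cons]
    exact h2.add h1

lemma measurable_fpt (A B : Set (V d)) : Measurable fun w : Cfg d => fpt w A B := by
  have heq : ∀ w : Cfg d, fpt w A B =
      sInf ((fun γ => pathCost w γ) '' {γ : List (V d) | γ.Chain' adj ∧ connects γ A B}) := by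
    intro w
    unfold fpt
    congr 1
    ext t
    constructor
    · rintro ⟨γ, h1, h2, h3⟩; exact ⟨γ, ⟨h1, h2⟩, h3⟩
    · rintro ⟨γ, ⟨h1, h2⟩, h3⟩; exact ⟨γ, h1, h2, h3⟩
  simp_rw [heq]
  exact Measurable.sInf (Set.to_countable _) fun γ _ => measurable_pathCost γ

lemma ae_nonneg_nu {ν : Measure ℝ} (hνpos : ν (Set.Iio 0) = 0) : ∀ᵐ t ∂ν, 0 ≤ t := by
  rw [ae_iff]
  have h : {t : ℝ | ¬ 0 ≤ t} = Set.Iio 0 := by ext t; simp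
  rw [h]; exact hνpos

lemma integrable_id_of_nu {ν : Measure ℝ} [IsProbabilityMeasure ν] (hνpos : ν (Set.Iio 0) = 0)
    {α : ℝ} (hα : 1 < α) (hA2 : Integrable (fun t : ℝ => t ^ α) ν) :
    Integrable (fun t : ℝ => t) ν := by
  refine Integrable.mono' ((integrable_const (1:ℝ)).add hA2)
    measurable_id.aestronglyMeasurable ?_
  filter_upwards [ae_nonneg_nu hνpos] with t ht
  rw [Real.norm_eq_abs, abs_of_nonneg ht]
  simp only [Pi.add_apply]
  by_cases h1 : t ≤ 1
  · have h2 : (0:ℝ) ≤ t ^ α := Real.rpow_nonneg ht α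
    linarith
  · push_neg at h1
    have h2 : t ^ (1:ℝ) ≤ t ^ α := Real.rpow_le_rpow_of_exponent_le (le_of_lt h1) (le_of_lt hα)
    rw [Real.rpow_one] at h2
    linarith

lemma eval_integrable {P : Measure (Cfg d)} {ν : Measure ℝ}
    (hmap : ∀ e : Sym2 (V d), IsEdge e → P.map (fun w => w e) = ν)
    (hint : Integrable (fun t : ℝ => t) ν) {e : Sym2 (V d)} (he : IsEdge e) :
    Integrable (fun w : Cfg d => w e) P := by
  have hm : Measurable fun w : Cfg d => w e := measurable_pi_apply e
  have h1 : Integrable (fun t : ℝ => t) (P.map (fun w => w e)) := by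
    rw [hmap e he]; exact hint
  exact (integrable_map_measure measurable_id.aestronglyMeasurable hm.aemeasurable).1 h1

lemma eval_integral {P : Measure (Cfg d)} {ν : Measure ℝ}
    (hmap : ∀ e : Sym2 (V d), IsEdge e → P.map (fun w => w e) = ν)
    {e : Sym2 (V d)} (he : IsEdge e) :
    ∫ w, w e ∂P = ∫ t, t ∂ν := by
  have hm : Measurable fun w : Cfg d => w e := measurable_pi_apply e
  rw [← hmap e he]
  exact (integral_map hm.aemeasurable measurable_id.aestronglyMeasurable).symm

lemma ae_edges_nonneg {P : Measure (Cfg d)} {ν : Measure ℝ}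
    (hmap : ∀ e : Sym2 (V d), IsEdge e → P.map (fun w => w e) = ν)
    (hνpos : ν (Set.Iio 0) = 0) :
    ∀ᵐ w ∂P, ∀ e, IsEdge e → 0 ≤ w e := by
  rw [ae_all_iff]
  intro e
  by_cases he : IsEdge e
  · have hm : Measurable fun w : Cfg d => w e := measurable_pi_apply e
    have h0 : P ((fun w : Cfg d => w e) ⁻¹' (Set.Iio 0)) = 0 := by
      rw [← Measure.map_apply_of_aemeasurable hm.aemeasurable measurableSet_Iio, hmap e he]
      exact hνpos
    rw [ae_iff]
    have hset : {w : Cfg d | ¬ (IsEdge e → 0 ≤ w e)} = (fun w : Cfg d => w e) ⁻¹' (Set.Iio 0) := by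
      ext w; simp [he, not_le]
    rw [hset]; exact h0
  · filter_upwards with w
    exact fun h => absurd h he

lemma integrable_pathCost {P : Measure (Cfg d)}
    (hint : ∀ e : Sym2 (V d), IsEdge e → Integrable (fun w : Cfg d => w e) P) :
    ∀ γ : List (V d), γ.Chain' adj → Integrable (fun w : Cfg d => pathCost w γ) P
  | [], _ => by simpa [pathCost_nil] using integrable_zero (Cfg d) ℝ P
  | [x], _ => by simpa [pathCost_single] using integrable_zero (Cfg d) ℝ P
  | x :: y :: r, h => by
    obtain ⟨h1, h2⟩ := List.isChain_cons_cons.1 h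
    have i1 := integrable_pathCost hint (y :: r) h2
    have i2 := hint s(x, y) ⟨x, y, h1, rfl⟩
    simp only [pathCost_cons]
    exact i2.add i1

lemma boxF_spec (R : ℝ) (c : Fin d → ℝ) (v : V d) :
    v ∈ Finset.Icc (fun i => ⌈c i - R⌉) (fun i => ⌊c i + R⌋) ↔ ∀ i, |(v i : ℝ) - c i| ≤ R := by
  rw [Finset.mem_Icc]
  constructor
  · rintro ⟨h1, h2⟩ i
    have ha := Int.ceil_le.1 (h1 i)
    have hb := Int.le_floor.1 (h2 i)
    rw [abs_le]
    constructor <;> linarith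
  · intro h
    constructor <;> intro i
    · exact Int.ceil_le.2 (by have := (abs_le.1 (h i)).1; linarith)
    · exact Int.le_floor.2 (by have := (abs_le.1 (h i)).2; linarith)

lemma boxF_card (R : ℝ) (hR : 1 ≤ R) (c : Fin d → ℝ) :
    (((Finset.Icc (fun i => ⌈c i - R⌉) (fun i => ⌊c i + R⌋) : Finset (V d))).card : ℝ)
      ≤ (4 * R) ^ d := by
  rw [Pi.card_Icc]
  push_cast
  have hbound : ∀ i : Fin d, ((Finset.Icc (⌈c i - R⌉) (⌊c i + R⌋)).card : ℝ) ≤ 4 * R := by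
    intro i
    rw [Int.card_Icc]
    have h1 : ((⌊c i + R⌋ + 1 - ⌈c i - R⌉).toNat : ℝ)
        = max (((⌊c i + R⌋ + 1 - ⌈c i - R⌉ : ℤ)) : ℝ) 0 := by
      have hmax := congrArg (fun z : ℤ => (z : ℝ))
        (Int.toNat_eq_max (⌊c i + R⌋ + 1 - ⌈c i - R⌉))
      push_cast at hmax
      rw [hmax]; push_cast; ring
    rw [h1]
    have h2 : ((⌊c i + R⌋ : ℤ) : ℝ) ≤ c i + R := Int.floor_le _
    have h3 : c i - R ≤ ((⌈c i - R⌉ : ℤ) : ℝ) := Int.le_ceil _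
    have h4 : (((⌊c i + R⌋ + 1 - ⌈c i - R⌉ : ℤ)) : ℝ) ≤ 4 * R := by push_cast; linarith
    exact max_le h4 (by linarith)
  calc ∏ i : Fin d, ((Finset.Icc (⌈c i - R⌉) (⌊c i + R⌋)).card : ℝ)
      ≤ ∏ _i : Fin d, (4 * R) :=
        Finset.prod_le_prod (fun i _ => Nat.cast_nonneg _) (fun i _ => hbound i)
    _ = (4 * R) ^ d := by rw [Finset.prod_const, Finset.card_univ, Fintype.card_fin]

lemma edgeF_spec (Bx : Finset (V d)) :
    ∃ Ef : Finset (Sym2 (V d)),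
      (∀ e ∈ Ef, IsEdge e) ∧
      (∀ x y : V d, adj x y → x ∈ Bx → y ∈ Bx → s(x, y) ∈ Ef) ∧
      ((Ef.card : ℝ) ≤ Bx.card * d) := by
  classical
  refine ⟨Finset.image (fun p : V d × Fin d => s(p.1, Function.update p.1 p.2 (p.1 p.2 + 1)))
    (Bx ×ˢ Finset.univ), ?_, ?_, ?_⟩
  · intro e he
    obtain ⟨p, _, rfl⟩ := Finset.mem_image.1 he
    exact ⟨p.1, _, adj_update p.1 p.2, rfl⟩
  · intro x y hxy hx hy
    obtain ⟨i, hc | hc⟩ := adj_char hxy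
    · exact Finset.mem_image.2 ⟨(x, i), Finset.mem_product.2 ⟨hx, Finset.mem_univ i⟩, by rw [← hc]⟩
    · refine Finset.mem_image.2 ⟨(y, i), Finset.mem_product.2 ⟨hy, Finset.mem_univ i⟩, ?_⟩
      show s(y, Function.update y i (y i + 1)) = s(x, y)
      rw [← hc]
      exact Sym2.eq_swap
  · calc ((Finset.image (fun p : V d × Fin d => s(p.1, Function.update p.1 p.2 (p.1 p.2 + 1)))
        (Bx ×ˢ Finset.univ)).card : ℝ)
        ≤ ((Bx ×ˢ (Finset.univ : Finset (Fin d))).card : ℝ) := by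
          exact_mod_cast Finset.card_image_le
      _ = Bx.card * d := by
          rw [Finset.card_product, Finset.card_univ, Fintype.card_fin]; push_cast; ring

set_option maxHeartbeats 1000000 in
/-- for `U ∈ ℤ^d` with `M ≤ |U|_∞`, `η := U/|U|` and `m := ⌊|U|⌋`, for
all large `m` there is a constant `C₉ > 0` with
`E[T(0,U)] ≤ E[T_σ(D_m(0), D_m(mη))] + C̃₃ m exp(−C̃₄ m^δ) + C₉ m^{dδ}`, where `C̃₃, C̃₄`
are the constants of Lemma 2.2. -/
theorem statement10 (d : ℕ) (hd : 2 ≤ d)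
    (ν : Measure ℝ) (hνprob : IsProbabilityMeasure ν) (hνpos : ν (Set.Iio 0) = 0)
    (α : ℝ) (hα : 1 < α) (hA2 : Integrable (fun t : ℝ => t ^ α) ν)
    (hA1 : (ν {0}).toReal < pc d)
    (P : Measure (Cfg d)) (hP : IID d P ν)
    (κ : ℝ) (hκ : κ ∈ Set.Ioo (0 : ℝ) 1)
    (hκpc : max (ν (Set.Iio κ)).toReal (ν (Set.Ioi κ⁻¹)).toReal < pc d)
    (δ : ℝ) (hδ0 : 0 < δ) (hδ : δ < 1 / d)
    (C3 C4 : ℝ) (hC3 : 0 < C3) (hC4 : 0 < C4)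
    (hLem : ∀ η : Fin d → ℝ, unitVec η → ∀ m : ℕ,
      |(∫ w, fpt w (Dbox κ δ m 0) (Dbox κ δ m ((m : ℝ) • η)) ∂P) -
        ∫ w, fpt (tw κ ((m : ℝ) ^ δ) w)
          (Dbox κ δ m 0) (Dbox κ δ m ((m : ℝ) • η)) ∂P|
        ≤ C3 * m * Real.exp (-C4 * (m : ℝ) ^ δ)) :
    ∃ C9 > (0 : ℝ), ∃ m0 : ℕ, ∀ (M : ℕ) (U : V d), (∃ i, (M : ℤ) ≤ |U i|) →
      ∀ m : ℕ, m = ⌊Real.sqrt (∑ i, (U i : ℝ) ^ 2)⌋₊ → m0 ≤ m →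
        ∫ w, pt w 0 U ∂P ≤
          (∫ w, fpt (tw κ ((m : ℝ) ^ δ) w) (Dbox κ δ m 0)
            (Dbox κ δ m ((m : ℝ) • fun i => (U i : ℝ) / Real.sqrt (∑ j, (U j : ℝ) ^ 2))) ∂P)
          + C3 * m * Real.exp (-C4 * (m : ℝ) ^ δ) + C9 * (m : ℝ) ^ ((d : ℝ) * δ) := by
  classical
  obtain ⟨hκ0, hκ1⟩ := hκ
  haveI := hνprob
  haveI := hP.1
  have hmap := hP.2.1
  have hid : Integrable (fun t : ℝ => t) ν := integrable_id_of_nu hνpos hα hA2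
  set μ1 : ℝ := ∫ t, t ∂ν with hμ1
  have hμ1nn : 0 ≤ μ1 := integral_nonneg_of_ae (ae_nonneg_nu hνpos)
  have hκinv1 : (1:ℝ) ≤ κ⁻¹ := (one_le_inv₀ hκ0).2 (le_of_lt hκ1)
  have hd0 : (0:ℝ) < d := by exact_mod_cast lt_of_lt_of_le two_pos hd
  set Kb : ℝ := 4 * (3 ^ d * κ⁻¹) with hKb
  have hKbpos : 0 < Kb := by
    rw [hKb]; positivity
  have hC9pos : 0 < 2 * (d:ℝ) * Kb ^ d * (μ1 + 1) := by
    apply mul_pos (mul_pos (mul_pos two_pos hd0) (pow_pos hKbpos d))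
    linarith
  refine ⟨2 * (d:ℝ) * Kb ^ d * (μ1 + 1), hC9pos, 1, ?_⟩
  intro M U _ m hm hm1
  set S : ℝ := ∑ i, ((U i : ℝ)) ^ 2 with hS
  have hSnn : 0 ≤ S := Finset.sum_nonneg fun i _ => sq_nonneg _
  have hm1' : (1:ℝ) ≤ (m:ℝ) := by exact_mod_cast hm1
  have hsq : (m : ℝ) ≤ Real.sqrt S := by rw [hm]; exact Nat.floor_le (Real.sqrt_nonneg S)
  have hlt : Real.sqrt S < (m:ℝ) + 1 := by rw [hm]; exact Nat.lt_floor_add_one _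
  have hsq1 : (1:ℝ) ≤ Real.sqrt S := le_trans hm1' hsq
  have hSqpos : 0 < Real.sqrt S := lt_of_lt_of_le one_pos hsq1
  have hSqne : Real.sqrt S ≠ 0 := ne_of_gt hSqpos
  have hS0 : S ≠ 0 := ne_of_gt (Real.sqrt_pos.1 hSqpos)
  set η : Fin d → ℝ := fun i => (U i : ℝ) / Real.sqrt S with hη
  have hunit : unitVec η := by
    show ∑ i, η i ^ 2 = 1
    calc ∑ i, η i ^ 2 = ∑ i, (U i:ℝ)^2 / S := Finset.sum_congr rfl fun i _ => by
          rw [hη]; rw [div_pow, Real.sq_sqrt hSnn]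
      _ = S / S := by rw [← Finset.sum_div]
      _ = 1 := div_self hS0
  have hηle : ∀ i, |η i| ≤ 1 := by
    intro i
    have h1 : η i ^ 2 ≤ 1 := le_trans
      (Finset.single_le_sum (fun j _ => sq_nonneg (η j)) (Finset.mem_univ i)) (le_of_eq hunit)
    nlinarith [sq_abs (η i), abs_nonneg (η i)]
  -- the radius
  have hmδ1 : (1:ℝ) ≤ (m:ℝ) ^ δ := by
    calc (1:ℝ) = 1 ^ δ := (Real.one_rpow δ).symm
      _ ≤ (m:ℝ) ^ δ := Real.rpow_le_rpow zero_le_one hm1' (le_of_lt hδ0)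
  have h3d : (1:ℝ) ≤ 3 ^ d := one_le_pow₀ (by norm_num)
  set R : ℝ := 3 ^ d * κ⁻¹ * (m : ℝ) ^ δ with hR
  have hR1 : 1 ≤ R := by
    rw [hR]
    have h1 := mul_le_mul h3d hκinv1 zero_le_one (le_trans zero_le_one h3d)
    have h2 := mul_le_mul h1 hmδ1 zero_le_one
      (le_trans zero_le_one (by linarith : (1:ℝ) ≤ 3^d * κ⁻¹))
    linarith
  -- edge finsets for the two boxes
  have main : ∀ c : Fin d → ℝ, ∃ Ef : Finset (Sym2 (V d)),
      (∀ e ∈ Ef, IsEdge e) ∧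
      (∀ x y : V d, adj x y → (∀ i, |(x i:ℝ) - c i| ≤ R) → (∀ i, |(y i:ℝ) - c i| ≤ R) →
        s(x, y) ∈ Ef) ∧
      ((Ef.card : ℝ) ≤ (4 * R) ^ d * d) := by
    intro c
    obtain ⟨Ef, h1, h2, h3⟩ := edgeF_spec (Finset.Icc (fun i => ⌈c i - R⌉) (fun i => ⌊c i + R⌋))
    exact ⟨Ef, h1,
      fun x y hxy hx hy => h2 x y hxy ((boxF_spec R c x).2 hx) ((boxF_spec R c y).2 hy),
      le_trans h3 (mul_le_mul_of_nonneg_right (boxF_card R hR1 c) (Nat.cast_nonneg d))⟩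
  obtain ⟨E0, hE0edge, hE0closed, hE0card⟩ := main 0
  obtain ⟨E1, hE1edge, hE1closed, hE1card⟩ := main ((m:ℝ) • η)
  -- memberships
  have h0A : (0 : V d) ∈ Dbox κ δ m (0 : Fin d → ℝ) := by
    have : ∀ i : Fin d, |(((0:V d) i : ℤ) : ℝ) - (0 : Fin d → ℝ) i| ≤ 3 ^ d * κ⁻¹ * (m : ℝ) ^ δ := by
      intro i
      have h0i : (((0:V d) i : ℤ) : ℝ) - (0 : Fin d → ℝ) i = 0 := by norm_num
      rw [h0i, abs_zero, ← hR]
      linarith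
    exact this
  have hUB : U ∈ Dbox κ δ m ((m:ℝ) • η) := by
    have : ∀ i : Fin d, |((U i : ℤ) : ℝ) - ((m:ℝ) • η) i| ≤ 3 ^ d * κ⁻¹ * (m : ℝ) ^ δ := by
      intro i
      have hsmul : ((m:ℝ) • η) i = (m:ℝ) * η i := rfl
      have hUi : ((U i : ℤ) : ℝ) = Real.sqrt S * η i := by
        rw [hη]; field_simp
      rw [hsmul, hUi, show Real.sqrt S * η i - (m:ℝ) * η i = (Real.sqrt S - m) * η i by ring,
        abs_mul, ← hR]
      have h1 : |Real.sqrt S - (m:ℝ)| ≤ 1 := by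
        rw [abs_le]; constructor <;> linarith
      calc |Real.sqrt S - (m:ℝ)| * |η i| ≤ 1 * 1 :=
            mul_le_mul h1 (hηle i) (abs_nonneg _) zero_le_one
        _ ≤ R := by linarith
    exact this
  -- the fixed path from 0 to U
  obtain ⟨γs, hγsc, hγsh, hγsl, -, -, -⟩ := exists_path U (∑ i, ((0:V d) i - U i).natAbs) 0 rfl
  -- lower bound helper
  have hlow : ∀ w : Cfg d, (∀ e, IsEdge e → 0 ≤ w e) → ∀ A B : Set (V d),
      ∀ t ∈ {t | ∃ γ : List (V d), γ.Chain' adj ∧ connects γ A B ∧ pathCost w γ = t}, 0 ≤ t := by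
    rintro w hw A B t ⟨γ, hγ, -, rfl⟩
    exact pathCost_nonneg hw γ hγ
  -- the core pointwise inequality
  have hcore : ∀ w : Cfg d, (∀ e, IsEdge e → 0 ≤ w e) →
      pt w 0 U ≤ fpt w (Dbox κ δ m 0) (Dbox κ δ m ((m:ℝ) • η))
        + ((∑ e ∈ E0, w e) + (∑ e ∈ E1, w e)) := by
    intro w hw
    have hSne' : {t | ∃ γ : List (V d), γ.Chain' adj ∧
        connects γ (Dbox κ δ m 0) (Dbox κ δ m ((m:ℝ) • η)) ∧ pathCost w γ = t}.Nonempty :=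
      ⟨pathCost w γs, γs, hγsc, ⟨⟨0, h0A, hγsh⟩, ⟨U, hUB, hγsl⟩⟩, rfl⟩
    have key : ∀ t ∈ {t | ∃ γ : List (V d), γ.Chain' adj ∧
        connects γ (Dbox κ δ m 0) (Dbox κ δ m ((m:ℝ) • η)) ∧ pathCost w γ = t},
        pt w 0 U ≤ t + ((∑ e ∈ E0, w e) + (∑ e ∈ E1, w e)) := by
      rintro t ⟨γ, hγc, ⟨⟨a, haA, hhead⟩, ⟨b, hbB, hlast⟩⟩, rfl⟩
      have haA' : ∀ i, |((a i : ℤ) : ℝ) - (0 : Fin d → ℝ) i| ≤ R := haA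
      have hbB' : ∀ i, |((b i : ℤ) : ℝ) - ((m:ℝ) • η) i| ≤ R := hbB
      have hUB' : ∀ i, |((U i : ℤ) : ℝ) - ((m:ℝ) • η) i| ≤ R := hUB
      obtain ⟨γ0, hγ0c, hγ0h, hγ0l, hγ0nd, hγ0box, -⟩ :=
        exists_path a (∑ i, ((0:V d) i - a i).natAbs) 0 rfl
      obtain ⟨γ1, hγ1c, hγ1h, hγ1l, hγ1nd, hγ1box, -⟩ :=
        exists_path U (∑ i, (b i - U i).natAbs) b rfl
      -- all vertices of γ0 are in the box around 0
      have hv0 : ∀ v ∈ γ0, ∀ i, |((v i : ℤ) : ℝ) - (0 : Fin d → ℝ) i| ≤ R := by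
        intro v hv i
        obtain ⟨hmin, hmax⟩ := hγ0box v hv i
        rw [show (0:V d) i = 0 from rfl] at hmin hmax
        have hcast1 : ((min (0:ℤ) (a i) : ℤ) : ℝ) ≤ ((v i : ℤ) : ℝ) := by exact_mod_cast hmin
        have hcast2 : ((v i : ℤ) : ℝ) ≤ ((max (0:ℤ) (a i) : ℤ) : ℝ) := by exact_mod_cast hmax
        push_cast at hcast1 hcast2
        have hai := haA' i
        rw [show (0 : Fin d → ℝ) i = 0 from rfl, sub_zero] at hai ⊢
        rw [abs_le] at hai ⊢
        constructor
        · have h2 : -R ≤ min (0:ℝ) ((a i : ℤ) : ℝ) := le_min (by linarith) (by linarith [hai.1])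
          linarith
        · have h2 : max (0:ℝ) ((a i : ℤ) : ℝ) ≤ R := max_le (by linarith) (by linarith [hai.2])
          linarith
      -- all vertices of γ1 are in the box around mη
      have hv1 : ∀ v ∈ γ1, ∀ i, |((v i : ℤ) : ℝ) - ((m:ℝ) • η) i| ≤ R := by
        intro v hv i
        obtain ⟨hmin, hmax⟩ := hγ1box v hv i
        have hcast1 : ((min (b i) (U i) : ℤ) : ℝ) ≤ ((v i : ℤ) : ℝ) := by exact_mod_cast hmin
        have hcast2 : ((v i : ℤ) : ℝ) ≤ ((max (b i) (U i) : ℤ) : ℝ) := by exact_mod_cast hmax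
        push_cast at hcast1 hcast2
        have hbi := abs_le.1 (hbB' i)
        have hUi := abs_le.1 (hUB' i)
        rw [abs_le]
        constructor
        · have h2 : ((m:ℝ) • η) i - R ≤ min ((b i : ℤ) : ℝ) ((U i : ℤ) : ℝ) :=
            le_min (by linarith [hbi.1]) (by linarith [hUi.1])
          linarith
        · have h2 : max ((b i : ℤ) : ℝ) ((U i : ℤ) : ℝ) ≤ ((m:ℝ) • η) i + R :=
            max_le (by linarith [hbi.2]) (by linarith [hUi.2])
          linarith
      -- cost bounds
      have hcost0 : pathCost w γ0 ≤ ∑ e ∈ E0, w e := by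
        apply pathCost_le_sum w E0 (fun e he => hw e (hE0edge e he)) γ0 hγ0nd
        intro e he
        obtain ⟨u, v, huv, hu, hv, rfl⟩ :=
          edgeList_spec (fun v => ∀ i, |((v i : ℤ) : ℝ) - (0 : Fin d → ℝ) i| ≤ R)
            γ0 hγ0c hv0 e he
        exact hE0closed u v huv hu hv
      have hcost1 : pathCost w γ1 ≤ ∑ e ∈ E1, w e := by
        apply pathCost_le_sum w E1 (fun e he => hw e (hE1edge e he)) γ1 hγ1nd
        intro e he
        obtain ⟨u, v, huv, hu, hv, rfl⟩ :=
          edgeList_spec (fun v => ∀ i, |((v i : ℤ) : ℝ) - ((m:ℝ) • η) i| ≤ R)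
            γ1 hγ1c hv1 e he
        exact hE1closed u v huv hu hv
      -- glue the three paths
      obtain ⟨γ01, hc01, hh01, hl01, hcost01⟩ := glue w γ0 hγ0l hhead hγ0c hγc
      obtain ⟨γf, hcf, hhf, hlf, hcostf⟩ :=
        glue w γ01 (by rw [hl01]; exact hlast) hγ1h hc01 hγ1c
      have hbdd : BddBelow {t | ∃ γ : List (V d), γ.Chain' adj ∧
          connects γ ({0} : Set (V d)) {U} ∧ pathCost w γ = t} :=
        ⟨0, fun t ht => hlow w hw _ _ t ht⟩
      have hmem : pathCost w γf ∈ {t | ∃ γ : List (V d), γ.Chain' adj ∧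
          connects γ ({0} : Set (V d)) {U} ∧ pathCost w γ = t} :=
        ⟨γf, hcf, ⟨⟨0, Set.mem_singleton _, by rw [hhf, hh01]; exact hγ0h⟩,
          ⟨U, Set.mem_singleton _, by rw [hlf]; exact hγ1l⟩⟩, rfl⟩
      have hptle : pt w 0 U ≤ pathCost w γf := csInf_le hbdd hmem
      rw [hcostf, hcost01] at hptle
      linarith
    have hfin : pt w 0 U - ((∑ e ∈ E0, w e) + (∑ e ∈ E1, w e))
        ≤ fpt w (Dbox κ δ m 0) (Dbox κ δ m ((m:ℝ) • η)) :=
      le_csInf hSne' (fun t ht => by linarith [key t ht])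
    linarith
  -- integrability
  have hintEdge : ∀ e : Sym2 (V d), IsEdge e → Integrable (fun w : Cfg d => w e) P :=
    fun e he => eval_integrable hmap hid he
  have hintγs : Integrable (fun w : Cfg d => pathCost w γs) P := integrable_pathCost hintEdge γs hγsc
  have haeW := ae_edges_nonneg hmap hνpos
  have hintE0 : Integrable (fun w : Cfg d => ∑ e ∈ E0, w e) P :=
    integrable_finset_sum _ (fun e he => hintEdge e (hE0edge e he))
  have hintE1 : Integrable (fun w : Cfg d => ∑ e ∈ E1, w e) P :=
    integrable_finset_sum _ (fun e he => hintEdge e (hE1edge e he))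
  have hintAB : Integrable (fun w : Cfg d =>
      fpt w (Dbox κ δ m 0) (Dbox κ δ m ((m:ℝ) • η))) P := by
    refine hintγs.mono' (measurable_fpt _ _).aestronglyMeasurable ?_
    filter_upwards [haeW] with w hw
    have h1 : 0 ≤ fpt w (Dbox κ δ m 0) (Dbox κ δ m ((m:ℝ) • η)) :=
      Real.sInf_nonneg (fun t ht => hlow w hw _ _ t ht)
    have h2 : fpt w (Dbox κ δ m 0) (Dbox κ δ m ((m:ℝ) • η)) ≤ pathCost w γs :=
      csInf_le ⟨0, fun t ht => hlow w hw _ _ t ht⟩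
        ⟨γs, hγsc, ⟨⟨0, h0A, hγsh⟩, ⟨U, hUB, hγsl⟩⟩, rfl⟩
    rw [Real.norm_eq_abs, abs_of_nonneg h1]
    exact h2
  have hintPt : Integrable (fun w : Cfg d => pt w 0 U) P := by
    refine hintγs.mono' (measurable_fpt _ _).aestronglyMeasurable ?_
    filter_upwards [haeW] with w hw
    have h1 : 0 ≤ pt w 0 U := Real.sInf_nonneg (fun t ht => hlow w hw _ _ t ht)
    have h2 : pt w 0 U ≤ pathCost w γs :=
      csInf_le ⟨0, fun t ht => hlow w hw _ _ t ht⟩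
        ⟨γs, hγsc, ⟨⟨0, Set.mem_singleton _, hγsh⟩, ⟨U, Set.mem_singleton _, hγsl⟩⟩, rfl⟩
    rw [Real.norm_eq_abs, abs_of_nonneg h1]
    exact h2
  -- integrate the core inequality
  have hstep1 : ∫ w, pt w 0 U ∂P ≤
      ∫ w, (fpt w (Dbox κ δ m 0) (Dbox κ δ m ((m:ℝ) • η))
        + ((∑ e ∈ E0, w e) + (∑ e ∈ E1, w e))) ∂P := by
    apply integral_mono_ae hintPt (hintAB.add (hintE0.add hintE1))
    filter_upwards [haeW] with w hw
    exact hcore w hw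
  have hadd1 : ∫ w, ((∑ e ∈ E0, w e) + (∑ e ∈ E1, w e)) ∂P
      = (∫ w, (∑ e ∈ E0, w e) ∂P) + ∫ w, (∑ e ∈ E1, w e) ∂P := integral_add hintE0 hintE1
  have hadd2 : ∫ w, (fpt w (Dbox κ δ m 0) (Dbox κ δ m ((m:ℝ) • η))
        + ((∑ e ∈ E0, w e) + (∑ e ∈ E1, w e))) ∂P
      = (∫ w, fpt w (Dbox κ δ m 0) (Dbox κ δ m ((m:ℝ) • η)) ∂P)
        + ∫ w, ((∑ e ∈ E0, w e) + (∑ e ∈ E1, w e)) ∂P :=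
    integral_add hintAB (hintE0.add hintE1)
  rw [hadd2, hadd1] at hstep1
  -- compute the box sums
  have hintsum0 : ∫ w, (∑ e ∈ E0, w e) ∂P = E0.card * μ1 := by
    rw [integral_finset_sum _ (fun e he => hintEdge e (hE0edge e he)),
      Finset.sum_congr rfl (fun e he => eval_integral hmap (hE0edge e he)),
      Finset.sum_const, nsmul_eq_mul]
  have hintsum1 : ∫ w, (∑ e ∈ E1, w e) ∂P = E1.card * μ1 := by
    rw [integral_finset_sum _ (fun e he => hintEdge e (hE1edge e he)),
      Finset.sum_congr rfl (fun e he => eval_integral hmap (hE1edge e he)),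
      Finset.sum_const, nsmul_eq_mul]
  -- the power computation
  set X : ℝ := (m:ℝ) ^ ((d:ℝ) * δ) with hX
  have hX0 : 0 ≤ X := Real.rpow_nonneg (Nat.cast_nonneg m) _
  have h4R : (4 * R) ^ d = Kb ^ d * X := by
    rw [hR, hKb, hX]
    rw [show (4:ℝ) * (3 ^ d * κ⁻¹ * (m:ℝ) ^ δ) = (4 * (3 ^ d * κ⁻¹)) * (m:ℝ) ^ δ by ring,
      mul_pow, ← Real.rpow_natCast ((m:ℝ) ^ δ) d, ← Real.rpow_mul (Nat.cast_nonneg m),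
      mul_comm δ (d:ℝ)]
  have hKbX : 0 ≤ Kb ^ d * X * d := by positivity
  have hcard0 : (E0.card : ℝ) ≤ Kb ^ d * X * d := by rw [← h4R]; exact hE0card
  have hcard1 : (E1.card : ℝ) ≤ Kb ^ d * X * d := by rw [← h4R]; exact hE1card
  have hsums : (E0.card : ℝ) * μ1 + (E1.card : ℝ) * μ1 ≤ 2 * (d:ℝ) * Kb ^ d * (μ1 + 1) * X := by
    have h1 : (E0.card : ℝ) * μ1 ≤ Kb ^ d * X * d * μ1 :=
      mul_le_mul_of_nonneg_right hcard0 hμ1nn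
    have h2 : (E1.card : ℝ) * μ1 ≤ Kb ^ d * X * d * μ1 :=
      mul_le_mul_of_nonneg_right hcard1 hμ1nn
    have h3 : Kb ^ d * X * d * μ1 + Kb ^ d * X * d * μ1 ≤ 2 * (d:ℝ) * Kb ^ d * (μ1 + 1) * X := by
      have h5 : Kb ^ d * X * d * μ1 ≤ Kb ^ d * X * d * (μ1 + 1) :=
        mul_le_mul_of_nonneg_left (by linarith) hKbX
      calc Kb ^ d * X * d * μ1 + Kb ^ d * X * d * μ1
          = 2 * (Kb ^ d * X * d * μ1) := by ring
        _ ≤ 2 * (Kb ^ d * X * d * (μ1 + 1)) := by linarith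
        _ = 2 * (d:ℝ) * Kb ^ d * (μ1 + 1) * X := by ring
    linarith
  -- the lemma hypothesis
  have habs := abs_le.1 (hLem η hunit m)
  linarith [habs.2, hstep1, hintsum0, hintsum1, hsums]


end FPP
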